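/- If (f_k) is a sequence of Z-almost automorphic functions from ℝ to ℂ^p that converges uniformly on ℝ to a function f, then f is Z-almost automorphic. Consequently, the space of Z-almost automorphic functions is a Banach space under the norm of uniform convergence. -/

import Mathlib

open MeasureTheory Filter Topology

/-- Bounded, piecewise continuous: continuous on ℝ ∖ ℤ with finite one-sided
limits at every integer. -/
def BddPC (p : ℕ) (f : ℝ → Fin p → ℂ) : Prop :=
  (∃ C : ℝ, ∀ t : ℝ, ‖f t‖ ≤ C) ∧
  ContinuousOn f {t : ℝ | ∀ n : ℤ, t ≠ (n : ℝ)} ∧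
  ∀ n : ℤ, (∃ L : Fin p → ℂ, Tendsto f (𝓝[<] (n : ℝ)) (𝓝 L)) ∧
           (∃ R : Fin p → ℂ, Tendsto f (𝓝[>] (n : ℝ)) (𝓝 R))

/-- `ℤ`-almost automorphic functions. -/
def ZAlmostAutomorphic (p : ℕ) (f : ℝ → Fin p → ℂ) : Prop :=
  BddPC p f ∧
  ∀ s : ℕ → ℤ, ∃ (φ : ℕ → ℕ) (g : ℝ → Fin p → ℂ), StrictMono φ ∧
    (∀ t : ℝ, Tendsto (fun n => f (t + (s (φ n) : ℝ))) atTop (𝓝 (g t))) ∧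
    (∀ t : ℝ, Tendsto (fun n => g (t - (s (φ n) : ℝ))) atTop (𝓝 (f t)))

/-- Almost automorphic functions in the sense of Bochner. -/
def AlmostAutomorphic (p : ℕ) (f : ℝ → Fin p → ℂ) : Prop :=
  (∃ C : ℝ, ∀ t : ℝ, ‖f t‖ ≤ C) ∧ Continuous f ∧
  ∀ s : ℕ → ℝ, ∃ (φ : ℕ → ℕ) (g : ℝ → Fin p → ℂ), StrictMono φ ∧
    (∀ t : ℝ, Tendsto (fun n => f (t + s (φ n))) atTop (𝓝 (g t))) ∧
    (∀ t : ℝ, Tendsto (fun n => g (t - s (φ n))) atTop (𝓝 (f t)))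

/-- If `F k → f` uniformly and every `F k` has a limit along a nontrivial filter `l`,
then `f` has a limit along `l`. -/
lemma exists_tendsto_of_tendstoUniformly_aux {α β : Type*} [MetricSpace β] [CompleteSpace β]
    {F : ℕ → α → β} {f : α → β} {l : Filter α} [l.NeBot]
    (hconv : TendstoUniformly F f atTop)
    (h : ∀ k, ∃ L, Tendsto (F k) l (𝓝 L)) : ∃ L, Tendsto f l (𝓝 L) := by
  choose L hL using h
  have hcauchy : CauchySeq L := by
    rw [Metric.cauchySeq_iff]
    intro ε hε
    obtain ⟨N, hN⟩ := eventually_atTop.mp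
      (Metric.tendstoUniformly_iff.mp hconv (ε / 4) (by positivity))
    refine ⟨N, fun m hm n hn => ?_⟩
    have h1 : Tendsto (fun x => dist (F m x) (F n x)) l (𝓝 (dist (L m) (L n))) :=
      (hL m).dist (hL n)
    have h2 : ∀ x, dist (F m x) (F n x) ≤ ε / 2 := fun x => by
      have := dist_triangle_left (F m x) (F n x) (f x)
      have hm' := hN m hm x
      have hn' := hN n hn x
      linarith
    have := le_of_tendsto h1 (Eventually.of_forall h2)
    linarith
  obtain ⟨ℓ, hℓ⟩ := cauchySeq_tendsto_of_complete hcauchy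
  exact ⟨ℓ, hconv.tendsto_of_eventually_tendsto (Eventually.of_forall hL) hℓ⟩

/-- Diagonal extraction lemma. -/
lemma diagonal_subseq_aux (P : ℕ → (ℕ → ℕ) → Prop)
    (hstable : ∀ k σ τ, StrictMono τ → P k σ → P k (σ ∘ τ))
    (htail : ∀ k σ, P k (fun n => σ (n + k)) → P k σ)
    (hext : ∀ (k : ℕ) (σ : ℕ → ℕ), StrictMono σ → ∃ τ, StrictMono τ ∧ P k (σ ∘ τ)) :
    ∃ d : ℕ → ℕ, StrictMono d ∧ ∀ k, P k d := by
  choose T hT1 hT2 using hext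
  let Ψ : ℕ → {σ : ℕ → ℕ // StrictMono σ} := fun k =>
    Nat.rec ⟨T 0 id strictMono_id, hT1 0 id strictMono_id⟩
      (fun k prev => ⟨prev.1 ∘ T (k + 1) prev.1 prev.2,
        prev.2.comp (hT1 (k + 1) prev.1 prev.2)⟩) k
  have hΨP : ∀ k, P k (Ψ k).1 := by
    intro k
    cases k with
    | zero =>
        have := hT2 0 id strictMono_id
        simp only [Function.id_comp] at this
        exact this
    | succ k => exact hT2 (k + 1) (Ψ k).1 (Ψ k).2
  have hstep : ∀ k, (Ψ (k + 1)).1 = (Ψ k).1 ∘ T (k + 1) (Ψ k).1 (Ψ k).2 := fun k => rfl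
  have hcomp : ∀ k m, ∃ χ : ℕ → ℕ, (Ψ (k + m)).1 = (Ψ k).1 ∘ χ ∧ ∀ i, i ≤ χ i := by
    intro k m
    induction m with
    | zero => exact ⟨id, rfl, fun i => le_rfl⟩
    | succ m ih =>
        obtain ⟨χ, h1, h2⟩ := ih
        refine ⟨χ ∘ T (k + m + 1) (Ψ (k + m)).1 (Ψ (k + m)).2, funext fun i => ?_, fun i =>
          le_trans ((hT1 (k + m + 1) (Ψ (k + m)).1 (Ψ (k + m)).2).le_apply) (h2 _)⟩
        exact congrFun h1 (T (k + m + 1) (Ψ (k + m)).1 (Ψ (k + m)).2 i)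
  set d : ℕ → ℕ := fun n => (Ψ n).1 n with hd_def
  have hd : StrictMono d := by
    apply strictMono_nat_of_lt_succ
    intro n
    obtain ⟨χ, h1, h2⟩ := hcomp n 1
    have hdn1 : d (n + 1) = (Ψ n).1 (χ (n + 1)) := by
      show (Ψ (n + 1)).1 (n + 1) = _
      rw [h1]; rfl
    rw [hdn1]
    exact (Ψ n).2 (lt_of_lt_of_le (Nat.lt_succ_self n) (h2 (n + 1)))
  refine ⟨d, hd, fun k => ?_⟩
  set ρ : ℕ → ℕ := fun n => (hcomp k n).choose (n + k) with hρ_def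
  have key : ∀ n, (Ψ k).1 (ρ n) = d (n + k) := by
    intro n
    have h1 := (hcomp k n).choose_spec.1
    have : (Ψ (k + n)).1 (n + k) = (Ψ k).1 ((hcomp k n).choose (n + k)) :=
      congrFun h1 (n + k)
    rw [hρ_def]
    rw [← this]
    show (Ψ (k + n)).1 (n + k) = (Ψ (n + k)).1 (n + k)
    rw [Nat.add_comm k n]
  have hρmono : StrictMono ρ := by
    apply strictMono_nat_of_lt_succ
    intro n
    have h := hd (show n + k < n + 1 + k by omega)
    rw [← key n, ← key (n + 1)] at h
    exact ((Ψ k).2.lt_iff_lt).mp h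
  have hP : P k ((Ψ k).1 ∘ ρ) := hstable k _ ρ hρmono (hΨP k)
  apply htail k d
  have heq : (fun n => d (n + k)) = (Ψ k).1 ∘ ρ := funext fun n => (key n).symm
  rw [heq]
  exact hP

/-- A uniform limit of `ℤ`-almost automorphic functions is `ℤ`-almost automorphic
(hence the space of `ℤ`-almost automorphic functions, being closed in the space of
bounded functions, is a Banach space under the norm of uniform convergence). -/
theorem zAlmostAutomorphic_of_tendstoUniformly {p : ℕ}
    (F : ℕ → ℝ → Fin p → ℂ) (f : ℝ → Fin p → ℂ)
    (hF : ∀ k : ℕ, ZAlmostAutomorphic p (F k))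
    (hconv : TendstoUniformly F f atTop) :
    ZAlmostAutomorphic p f := by
  constructor
  · -- BddPC
    refine ⟨?_, ?_, ?_⟩
    · -- boundedness
      obtain ⟨N, hN⟩ := eventually_atTop.mp
        (Metric.tendstoUniformly_iff.mp hconv 1 one_pos)
      obtain ⟨C, hC⟩ := (hF N).1.1
      refine ⟨C + 1, fun t => ?_⟩
      have h1 : dist (f t) (F N t) < 1 := hN N le_rfl t
      have h2 : ‖f t‖ ≤ dist (f t) (F N t) + ‖F N t‖ := by
        have := dist_triangle (f t) (F N t) 0
        simpa [dist_zero_right] using this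
      have := hC t
      linarith
    · -- continuity off ℤ
      have := (hconv.tendstoUniformlyOn
        (s := {t : ℝ | ∀ n : ℤ, t ≠ (n : ℝ)})).continuousOn
        (Eventually.of_forall fun k => (hF k).1.2.1).frequently
      exact this
    · -- one-sided limits
      intro n
      constructor
      · exact exists_tendsto_of_tendstoUniformly_aux hconv (fun k => ((hF k).1.2.2 n).1)
      · exact exists_tendsto_of_tendstoUniformly_aux hconv (fun k => ((hF k).1.2.2 n).2)
  · -- almost automorphy
    intro s
    set P : ℕ → (ℕ → ℕ) → Prop := fun k σ =>
      ∃ g : ℝ → Fin p → ℂ,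
        (∀ t : ℝ, Tendsto (fun n => F k (t + (s (σ n) : ℝ))) atTop (𝓝 (g t))) ∧
        (∀ t : ℝ, Tendsto (fun n => g (t - (s (σ n) : ℝ))) atTop (𝓝 (F k t))) with hP_def
    have hstable : ∀ k σ τ, StrictMono τ → P k σ → P k (σ ∘ τ) := by
      rintro k σ τ hτ ⟨g, h1, h2⟩
      exact ⟨g, fun t => (h1 t).comp hτ.tendsto_atTop,
        fun t => (h2 t).comp hτ.tendsto_atTop⟩
    have htail : ∀ k σ, P k (fun n => σ (n + k)) → P k σ := by
      rintro k σ ⟨g, h1, h2⟩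
      exact ⟨g, fun t => (tendsto_add_atTop_iff_nat k).mp (h1 t),
        fun t => (tendsto_add_atTop_iff_nat k).mp (h2 t)⟩
    have hext : ∀ (k : ℕ) (σ : ℕ → ℕ), StrictMono σ → ∃ τ, StrictMono τ ∧ P k (σ ∘ τ) := by
      intro k σ hσ
      obtain ⟨φ, g, hφ, h1, h2⟩ := (hF k).2 (fun n => s (σ n))
      exact ⟨φ, hφ, g, h1, h2⟩
    obtain ⟨d, hd, hPd⟩ := diagonal_subseq_aux P hstable htail hext
    choose g hg1 hg2 using hPd
    -- g is uniformly Cauchy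
    have hgC : UniformCauchySeqOn g atTop Set.univ := by
      rw [Metric.uniformCauchySeqOn_iff]
      intro ε hε
      obtain ⟨N, hN⟩ := eventually_atTop.mp
        (Metric.tendstoUniformly_iff.mp hconv (ε / 4) (by positivity))
      refine ⟨N, fun m hm n hn x _ => ?_⟩
      have h1 : Tendsto (fun j => dist (F m (x + (s (d j) : ℝ))) (F n (x + (s (d j) : ℝ))))
          atTop (𝓝 (dist (g m x) (g n x))) := (hg1 m x).dist (hg1 n x)
      have h2 : ∀ j, dist (F m (x + (s (d j) : ℝ))) (F n (x + (s (d j) : ℝ))) ≤ ε / 2 := by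
        intro j
        have := dist_triangle_left (F m (x + (s (d j) : ℝ))) (F n (x + (s (d j) : ℝ)))
          (f (x + (s (d j) : ℝ)))
        have hm' := hN m hm (x + (s (d j) : ℝ))
        have hn' := hN n hn (x + (s (d j) : ℝ))
        linarith
      have := le_of_tendsto h1 (Eventually.of_forall h2)
      linarith
    have hG : ∀ x : ℝ, ∃ G : Fin p → ℂ, Tendsto (fun k => g k x) atTop (𝓝 G) := by
      intro x
      exact cauchySeq_tendsto_of_complete (hgC.cauchy_map (Set.mem_univ x))
    choose G hGt using hG
    have hgU : TendstoUniformly (fun k => g k) G atTop := by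
      have := hgC.tendstoUniformlyOn_of_tendsto (fun x _ => hGt x)
      rwa [tendstoUniformlyOn_univ] at this
    refine ⟨d, G, hd, fun t => ?_, fun t => ?_⟩
    · have hU : TendstoUniformly (fun k n => F k (t + (s (d n) : ℝ)))
          (fun n => f (t + (s (d n) : ℝ))) atTop :=
        hconv.comp (fun n => t + (s (d n) : ℝ))
      exact hU.tendsto_of_eventually_tendsto (Eventually.of_forall fun k => hg1 k t)
        (hgU.tendsto_at t)
    · have hU : TendstoUniformly (fun k n => g k (t - (s (d n) : ℝ)))
          (fun n => G (t - (s (d n) : ℝ))) atTop :=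
        hgU.comp (fun n => t - (s (d n) : ℝ))
      exact hU.tendsto_of_eventually_tendsto (Eventually.of_forall fun k => hg2 k t)
        (hconv.tendsto_at t)
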